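/- Let k, C_1, C_2 ∈ ℝ and let I be an open interval on which 2k·(t + C_2)^3 + 3C_1 > 0 and t + C_2 ≠ 0. If u is a twice differentiable nonvanishing function on I satisfying u(t)^2 = 3(t + C_2)^2/(2k·(t + C_2)^3 + 3C_1) for all t ∈ I, then u satisfies the second-order Abel chain equation u''(t) + k^2·u(t)^5 + 4k·u'(t)·u(t)^2 = 0 for all t ∈ I. -/

import Mathlib

theorem second_abel_explicit_solution
    (k C₁ C₂ : ℝ)
    (I : Set ℝ) (hIopen : IsOpen I) (hIconn : I.OrdConnected)
    (hpos : ∀ t ∈ I, 2 * k * (t + C₂) ^ 3 + 3 * C₁ > 0)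
    (hne : ∀ t ∈ I, t + C₂ ≠ 0)
    (u : ℝ → ℝ)
    (hu1 : DifferentiableOn ℝ u I) (hu2 : DifferentiableOn ℝ (deriv u) I)
    (hu0 : ∀ t ∈ I, u t ≠ 0)
    (hsol : ∀ t ∈ I, u t ^ 2 = 3 * (t + C₂) ^ 2 / (2 * k * (t + C₂) ^ 3 + 3 * C₁)) :
    ∀ t ∈ I, deriv (deriv u) t + k ^ 2 * u t ^ 5 + 4 * k * deriv u t * u t ^ 2 = 0 := by
  intro t ht
  have hD : ∀ x ∈ I, (2 * k * (x + C₂) ^ 3 + 3 * C₁) ≠ 0 := fun x hx => ne_of_gt (hpos x hx)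
  set F : ℝ → ℝ := fun x => 3 * (x + C₂) ^ 2 / (2 * k * (x + C₂) ^ 3 + 3 * C₁) with hF
  set G : ℝ → ℝ := fun x =>
    (18 * C₁ * (x + C₂) - 6 * k * (x + C₂) ^ 4) / (2 * k * (x + C₂) ^ 3 + 3 * C₁) ^ 2 with hG
  -- derivative of the shift
  have hs : ∀ x : ℝ, HasDerivAt (fun y => y + C₂) 1 x := fun x => (hasDerivAt_id x).add_const C₂
  have hden : ∀ x : ℝ, HasDerivAt (fun y => 2 * k * (y + C₂) ^ 3 + 3 * C₁)
      (2 * k * (3 * (x + C₂) ^ 2 * 1)) x := by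
    intro x
    exact ((((hs x).pow 3).const_mul (2 * k)).add_const (3 * C₁))
  have hnum : ∀ x : ℝ, HasDerivAt (fun y => 3 * (y + C₂) ^ 2) (3 * (2 * (x + C₂) ^ 1 * 1)) x := by
    intro x
    exact ((hs x).pow 2).const_mul 3
  -- F has derivative G on I
  have hFG : ∀ x ∈ I, HasDerivAt F (G x) x := by
    intro x hx
    have h := (hnum x).div (hden x) (hD x hx)
    refine h.congr_deriv ?_
    have hDx := hD x hx
    field_simp [hG]
    ring
  -- G has derivative M / D ^ 3 on I
  have hGM : ∀ x ∈ I, HasDerivAt G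
      ((54 * C₁ ^ 2 - 252 * k * C₁ * (x + C₂) ^ 3 + 24 * k ^ 2 * (x + C₂) ^ 6)
        / (2 * k * (x + C₂) ^ 3 + 3 * C₁) ^ 3) x := by
    intro x hx
    have hn : HasDerivAt (fun y => 18 * C₁ * (y + C₂) - 6 * k * (y + C₂) ^ 4)
        (18 * C₁ * 1 - 6 * k * (4 * (x + C₂) ^ 3 * 1)) x := by
      exact ((hs x).const_mul (18 * C₁)).sub (((hs x).pow 4).const_mul (6 * k))
    have hd : HasDerivAt (fun y => (2 * k * (y + C₂) ^ 3 + 3 * C₁) ^ 2)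
        (2 * (2 * k * (x + C₂) ^ 3 + 3 * C₁) ^ 1 * (2 * k * (3 * (x + C₂) ^ 2 * 1))) x :=
      (hden x).pow 2
    have h := hn.div hd (pow_ne_zero 2 (hD x hx))
    refine h.congr_deriv ?_
    have hDx := hD x hx
    field_simp [hG]
    ring
  -- u differentiable at points of I
  have hmem : I ∈ nhds t := hIopen.mem_nhds ht
  have hudiff : ∀ x ∈ I, HasDerivAt u (deriv u x) x := fun x hx =>
    (hu1.differentiableAt (hIopen.mem_nhds hx)).hasDerivAt
  -- first derivative relation: 2 u u' = G on I
  have key1 : ∀ x ∈ I, 2 * u x * deriv u x = G x := by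
    intro x hx
    have heq : (fun y => u y ^ 2) =ᶠ[nhds x] F :=
      Filter.eventuallyEq_of_mem (hIopen.mem_nhds hx) hsol
    have h1 : deriv (fun y => u y ^ 2) x = deriv F x := heq.deriv_eq
    have h2 : HasDerivAt (fun y => u y ^ 2) (2 * u x ^ 1 * deriv u x) x :=
      (hudiff x hx).pow 2
    rw [(hFG x hx).deriv] at h1
    rw [h2.deriv] at h1
    rw [← h1]; ring
  -- second derivative relation
  have key2 : 2 * (deriv u t * deriv u t + u t * deriv (deriv u) t) =
      (54 * C₁ ^ 2 - 252 * k * C₁ * (t + C₂) ^ 3 + 24 * k ^ 2 * (t + C₂) ^ 6)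
        / (2 * k * (t + C₂) ^ 3 + 3 * C₁) ^ 3 := by
    have heq : (fun y => 2 * u y * deriv u y) =ᶠ[nhds t] G :=
      Filter.eventuallyEq_of_mem hmem key1
    have h1 : deriv (fun y => 2 * u y * deriv u y) t = deriv G t := heq.deriv_eq
    have hu't : HasDerivAt (deriv u) (deriv (deriv u) t) t :=
      (hu2.differentiableAt hmem).hasDerivAt
    have h2 : HasDerivAt (fun y => 2 * u y * deriv u y)
        (2 * (deriv u t * deriv u t + u t * deriv (deriv u) t)) t := by
      have := (((hudiff t ht).const_mul 2).mul hu't)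
      exact this.congr_deriv (by ring)
    rw [(hGM t ht).deriv, h2.deriv] at h1
    exact h1
  -- now algebra
  set a := u t
  set b := deriv u t
  set c := deriv (deriv u) t
  set s := t + C₂ with hsdef
  set D := 2 * k * s ^ 3 + 3 * C₁ with hDdef
  have hDt : D ≠ 0 := hD t ht
  have ha : a ≠ 0 := hu0 t ht
  have e1 : a ^ 2 * D = 3 * s ^ 2 := by
    have h := hsol t ht
    rw [hsdef, hDdef, hsdef] at *
    field_simp at h ⊢
    rw [show a ^ 2 = u t ^ 2 from rfl, h]
    field_simp [show (t + C₂) ^ 3 * 2 * k + 3 * C₁ ≠ 0 by rw [show (t + C₂) ^ 3 * 2 * k + 3 * C₁ = 2 * k * (t + C₂) ^ 3 + 3 * C₁ by ring]; exact hDt]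
  have e2 : (2 * a * b) * D ^ 2 = 18 * C₁ * s - 6 * k * s ^ 4 := by
    have h := key1 t ht
    rw [hG] at h
    simp only [← hsdef, ← hDdef] at h
    field_simp at h ⊢
    linarith [h]
  have e3 : (2 * (b * b + a * c)) * D ^ 3 =
      54 * C₁ ^ 2 - 252 * k * C₁ * s ^ 3 + 24 * k ^ 2 * s ^ 6 := by
    have h := key2
    field_simp at h ⊢
    linarith [h]
  have key : (c + k ^ 2 * a ^ 5 + 4 * k * b * a ^ 2) * (4 * a ^ 3 * D ^ 4) = 0 := by
    linear_combination
      (2 * ((2 * (b * b + a * c)) * D ^ 3)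
        + 4 * k ^ 2 * (a ^ 2 * D + 3 * s ^ 2) * ((a ^ 2 * D) ^ 2 + (3 * s ^ 2) ^ 2)
        + 8 * k * (18 * C₁ * s - 6 * k * s ^ 4) * (a ^ 2 * D + 3 * s ^ 2)) * e1
      + (-((2 * a * b) * D ^ 2 + (18 * C₁ * s - 6 * k * s ^ 4)) + 8 * k * (a ^ 2 * D) ^ 2) * e2
      + (2 * (3 * s ^ 2)) * e3
  have h4 : (4 : ℝ) * a ^ 3 * D ^ 4 ≠ 0 := by positivity
  exact (mul_eq_zero.mp key).resolve_right h4
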